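/- Fix reals 1 = σ_1 ≥ σ_2 ≥ … ≥ σ_d > 0, set S_d := ∏_{i=1}^d (−σ_i, σ_i], B_0 := S_d and, for n ≥ 1, B_n := ∏_{i=1}^d (−2^n σ_i, 2^n σ_i] ∖ ∏_{i=1}^d (−2^{n−1} σ_i, 2^{n−1} σ_i]. Let μ and ν be probability measures on ℝ^d with finite second moments. Then W₂²(μ, ν) ≤ 2d Σ_{n≥0} 2^{2n} [ | μ(B_n) − ν(B_n) | + min(μ(B_n), ν(B_n)) · W₂²( R_{B_n}μ, R_{B_n}ν ) ], where terms with min(μ(B_n), ν(B_n)) = 0 contribute only the first summand. -/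

import Mathlib

open MeasureTheory ProbabilityTheory Real
open scoped ENNReal NNReal BigOperators

/-- Squared Wasserstein-2 distance: infimum over couplings of `∫ ‖x - y‖²`. -/
noncomputable def W2sq {E : Type*} [NormedAddCommGroup E] [MeasurableSpace E]
    (μ ν : Measure E) : ℝ :=
  sInf { r : ℝ | ∃ γ : Measure (E × E), IsProbabilityMeasure γ ∧
    γ.map Prod.fst = μ ∧ γ.map Prod.snd = ν ∧ r = ∫ p, ‖p.1 - p.2‖ ^ 2 ∂γ }

/-- Empirical measure of `N` points. -/
noncomputable def empMeasure {E : Type*} [MeasurableSpace E] {N : ℕ}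
    (y : Fin N → E) : Measure E :=
  ((N : ℝ≥0∞))⁻¹ • ∑ i, Measure.dirac (y i)

/-- Sixth-moment scale of the `i`-th coordinate: `σ_i = (∫ y_i^6 dμ)^{1/6}`. -/
noncomputable def sigma6 {d : ℕ} (μ : Measure (EuclideanSpace ℝ (Fin d))) (i : Fin d) : ℝ :=
  (∫ y, y i ^ 6 ∂μ) ^ ((1 : ℝ) / 6)

/-- `M = (∫ Σ_i y_i^6 dμ)^{1/6}`. -/
noncomputable def sixthM {d : ℕ} (μ : Measure (EuclideanSpace ℝ (Fin d))) : ℝ :=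
  (∫ y, ∑ i, y i ^ 6 ∂μ) ^ ((1 : ℝ) / 6)

/-- The box `∏_i (-c σ_i, c σ_i]`. -/
def box {d : ℕ} (σ : Fin d → ℝ) (c : ℝ) : Set (EuclideanSpace ℝ (Fin d)) :=
  {x | ∀ i, -(c * σ i) < x i ∧ x i ≤ c * σ i}

/-- The annuli `B_0 = S_d`, `B_n = ∏(-2^n σ_i, 2^n σ_i] \ ∏(-2^{n-1} σ_i, 2^{n-1} σ_i]`. -/
def Bset {d : ℕ} (σ : Fin d → ℝ) : ℕ → Set (EuclideanSpace ℝ (Fin d))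
  | 0 => box σ 1
  | n + 1 => box σ (2 ^ (n + 1)) \ box σ (2 ^ n)

/-- `R_{B}μ`: pushforward of the normalized restriction `μ|_B / μ(B)` by `x ↦ 2^{-n} x`. -/
noncomputable def RB {d : ℕ} (μ : Measure (EuclideanSpace ℝ (Fin d)))
    (B : Set (EuclideanSpace ℝ (Fin d))) (n : ℕ) : Measure (EuclideanSpace ℝ (Fin d)) :=
  Measure.map (fun x => ((2 : ℝ) ^ n)⁻¹ • x) ((μ B)⁻¹ • μ.restrict B)

/-- The grid cell `2^{1-ℓ} k + (-2^{-ℓ}, 2^{-ℓ}]^d`, `k ∈ ℤ^d`. -/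
def gridCell (d : ℕ) (ℓ : ℕ) (k : Fin d → ℤ) : Set (EuclideanSpace ℝ (Fin d)) :=
  {x | ∀ i, 2 ^ (1 - (ℓ : ℤ)) * (k i : ℝ) - 2 ^ (-(ℓ : ℤ)) < x i ∧
    x i ≤ 2 ^ (1 - (ℓ : ℤ)) * (k i : ℝ) + 2 ^ (-(ℓ : ℤ))}

/-- `D_2(μ, ν) = (3/2) Σ_{ℓ≥1} 2^{-2ℓ} Σ_{F ∈ 𝒫_ℓ} |μ(F) - ν(F)|`, where `𝒫_ℓ` is the
minimal family of level-`ℓ` grid cells covering `S_d`. -/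
noncomputable def D2dist {d : ℕ} (σ : Fin d → ℝ)
    (μ ν : Measure (EuclideanSpace ℝ (Fin d))) : ℝ :=
  (3 / 2) * ∑' ℓ : ℕ, (2 : ℝ) ^ (-2 * ((ℓ : ℤ) + 1)) *
    ∑' F : {k : Fin d → ℤ // (gridCell d (ℓ + 1) k ∩ box σ 1).Nonempty},
      |(μ (gridCell d (ℓ + 1) F.1)).toReal - (ν (gridCell d (ℓ + 1) F.1)).toReal|

/-- `𝒟_2(μ, ν) = Σ_{n≥0} 2^{2n} [ |μ(B_n) - ν(B_n)| + (μ(B_n) ∧ ν(B_n)) D_2(R_{B_n}μ, R_{B_n}ν) ]`. -/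
noncomputable def Dcal2 {d : ℕ} (σ : Fin d → ℝ)
    (μ ν : Measure (EuclideanSpace ℝ (Fin d))) : ℝ :=
  ∑' n : ℕ, (2 : ℝ) ^ (2 * n) *
    (|(μ (Bset σ n)).toReal - (ν (Bset σ n)).toReal| +
      min (μ (Bset σ n)).toReal (ν (Bset σ n)).toReal *
        D2dist σ (RB μ (Bset σ n) n) (RB ν (Bset σ n) n))


section W2aux

variable {E : Type*} [NormedAddCommGroup E] [MeasurableSpace E]

lemma W2sq_nonneg (μ ν : Measure E) : 0 ≤ W2sq μ ν := by
  apply Real.sInf_nonneg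
  rintro r ⟨γ, _, _, _, rfl⟩
  exact integral_nonneg fun p => by positivity

lemma W2sq_le_integral {μ ν : Measure E} {γ : Measure (E × E)} (hγ : IsProbabilityMeasure γ)
    (h1 : γ.map Prod.fst = μ) (h2 : γ.map Prod.snd = ν) :
    W2sq μ ν ≤ ∫ p, ‖p.1 - p.2‖ ^ 2 ∂γ := by
  apply csInf_le
  · exact ⟨0, by rintro r ⟨γ', _, _, _, rfl⟩; exact integral_nonneg fun p => by positivity⟩
  · exact ⟨γ, hγ, h1, h2, rfl⟩

lemma exists_coupling_lt {μ ν : Measure E} [IsProbabilityMeasure μ] [IsProbabilityMeasure ν]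
    {ε : ℝ} (hε : 0 < ε) :
    ∃ γ : Measure (E × E), IsProbabilityMeasure γ ∧
      γ.map Prod.fst = μ ∧ γ.map Prod.snd = ν ∧
      (∫ p, ‖p.1 - p.2‖ ^ 2 ∂γ) < W2sq μ ν + ε := by
  have hne : { r : ℝ | ∃ γ : Measure (E × E), IsProbabilityMeasure γ ∧
      γ.map Prod.fst = μ ∧ γ.map Prod.snd = ν ∧ r = ∫ p, ‖p.1 - p.2‖ ^ 2 ∂γ }.Nonempty := by
    refine ⟨∫ p, ‖p.1 - p.2‖ ^ 2 ∂(μ.prod ν), μ.prod ν, inferInstance, ?_, ?_, rfl⟩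
    · simp [Measure.map_fst_prod]
    · simp [Measure.map_snd_prod]
  obtain ⟨r, ⟨γ, h1, h2, h3, rfl⟩, hlt⟩ :=
    exists_lt_of_csInf_lt hne (lt_add_of_pos_right (W2sq μ ν) hε)
  exact ⟨γ, h1, h2, h3, hlt⟩

end W2aux

lemma map_sum_meas {α β : Type*} [MeasurableSpace α] [MeasurableSpace β]
    {f : α → β} (hf : Measurable f) (μs : ℕ → Measure α) :
    (Measure.sum μs).map f = Measure.sum (fun n => (μs n).map f) := by
  ext s hs
  rw [Measure.map_apply hf hs, Measure.sum_apply _ (hf hs), Measure.sum_apply _ hs]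
  exact tsum_congr fun n => (Measure.map_apply hf hs).symm

section geo

variable {d : ℕ} {σ : Fin d → ℝ}

lemma measurableSet_box (σ : Fin d → ℝ) (c : ℝ) : MeasurableSet (box σ c) := by
  have : box σ c = ⋂ i, ((fun x : EuclideanSpace ℝ (Fin d) => x i) ⁻¹'
      (Set.Ioc (-(c * σ i)) (c * σ i))) := by
    ext x; simp [box, Set.mem_iInter, Set.mem_Ioc]
  rw [this]
  exact MeasurableSet.iInter fun i => ((measurable_pi_apply i).comp (WithLp.measurable_ofLp 2 _)) measurableSet_Ioc

lemma box_mono (hσpos : ∀ i, 0 < σ i) {c c' : ℝ} (hc : 0 < c) (hcc : c ≤ c') :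
    box σ c ⊆ box σ c' := by
  intro x hx i
  obtain ⟨h1, h2⟩ := hx i
  have hσ := (hσpos i).le
  constructor
  · have : c * σ i ≤ c' * σ i := mul_le_mul_of_nonneg_right hcc hσ
    linarith
  · nlinarith

lemma measurableSet_Bset (σ : Fin d → ℝ) (n : ℕ) : MeasurableSet (Bset σ n) := by
  cases n with
  | zero => exact measurableSet_box σ 1
  | succ n => exact (measurableSet_box σ _).diff (measurableSet_box σ _)

lemma Bset_subset_box (n : ℕ) : Bset σ n ⊆ box σ (2 ^ n) := by
  cases n with
  | zero => simpa [Bset] using subset_rfl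
  | succ n => exact Set.diff_subset

lemma Bset_disjoint (hσpos : ∀ i, 0 < σ i) : Pairwise (Function.onFun Disjoint (Bset σ)) := by
  have key : ∀ m n : ℕ, m < n → Disjoint (Bset σ m) (Bset σ n) := by
    intro m n hmn
    obtain ⟨k, rfl⟩ : ∃ k, n = k + 1 := ⟨n - 1, by omega⟩
    refine Set.disjoint_left.2 fun x hxm hxn => ?_
    have h1 : x ∈ box σ (2 ^ m) := Bset_subset_box m hxm
    have h2 : x ∈ box σ (2 ^ k) :=
      box_mono hσpos (by positivity) (by
        have : (2:ℝ) ^ m ≤ 2 ^ k := pow_le_pow_right₀ (by norm_num) (by omega)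
        exact this) h1
    exact hxn.2 h2
  intro m n hmn
  rcases lt_or_gt_of_ne hmn with h | h
  · exact key m n h
  · exact (key n m h).symm

lemma box_subset_iUnion_Bset (hσpos : ∀ i, 0 < σ i) (n : ℕ) :
    box σ (2 ^ n) ⊆ ⋃ k, Bset σ k := by
  induction n with
  | zero =>
    intro x hx
    exact Set.mem_iUnion.2 ⟨0, by simpa [Bset] using hx⟩
  | succ n ih =>
    intro x hx
    by_cases h : x ∈ box σ (2 ^ n)
    · exact ih h
    · exact Set.mem_iUnion.2 ⟨n + 1, ⟨hx, h⟩⟩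

lemma iUnion_Bset (hσpos : ∀ i, 0 < σ i) : (⋃ n, Bset σ n) = Set.univ := by
  refine Set.eq_univ_of_forall fun x => ?_
  obtain ⟨n, hn⟩ : ∃ n : ℕ, ∀ i, |x i| < 2 ^ n * σ i := by
    by_cases hd : Nonempty (Fin d)
    · obtain ⟨M, hM⟩ := Finite.exists_le (fun i : Fin d => |x i| / σ i)
      obtain ⟨n, hn⟩ := pow_unbounded_of_one_lt (M + 1) (by norm_num : (1:ℝ) < 2)
      refine ⟨n, fun i => ?_⟩
      have h1 : |x i| / σ i ≤ M := hM i
      have h2 : |x i| ≤ M * σ i := by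
        rw [div_le_iff₀ (hσpos i)] at h1; linarith
      have h3 : M + 1 ≤ 2 ^ n := hn.le
      nlinarith [hσpos i]
    · exact ⟨0, fun i => absurd ⟨i⟩ hd⟩
  refine box_subset_iUnion_Bset hσpos n fun i => ?_
  obtain ⟨h1, h2⟩ := abs_lt.1 (hn i)
  exact ⟨h1, h2.le⟩

lemma norm_sq_eq (x : EuclideanSpace ℝ (Fin d)) : ‖x‖ ^ 2 = ∑ i, (x i) ^ 2 := by
  rw [EuclideanSpace.norm_eq, Real.sq_sqrt (by positivity)]
  simp [sq_abs]

lemma norm_sq_le_of_mem_box (hσpos : ∀ i, 0 < σ i) (hσle1 : ∀ i, σ i ≤ 1) {c : ℝ} (hc : 0 ≤ c)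
    {x : EuclideanSpace ℝ (Fin d)} (hx : x ∈ box σ c) : ‖x‖ ^ 2 ≤ d * c ^ 2 := by
  rw [norm_sq_eq]
  calc ∑ i, (x i) ^ 2 ≤ ∑ _i : Fin d, c ^ 2 := by
        refine Finset.sum_le_sum fun i _ => ?_
        obtain ⟨h1, h2⟩ := hx i
        have hle1 : σ i ≤ 1 := hσle1 i
        have hσn : 0 < σ i := hσpos i
        have habs : |x i| ≤ c * σ i := abs_le.2 ⟨by linarith, h2⟩
        have h3 : c * σ i ≤ c := by nlinarith
        calc (x i) ^ 2 = |x i| ^ 2 := (sq_abs _).symm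
          _ ≤ c ^ 2 := pow_le_pow_left₀ (abs_nonneg _) (le_trans habs h3) 2
    _ = d * c ^ 2 := by simp [Finset.sum_const, Finset.card_univ, mul_comm]

lemma abs_coord_le_norm (x : EuclideanSpace ℝ (Fin d)) (i : Fin d) : |x i| ≤ ‖x‖ := by
  have h1 : (x i) ^ 2 ≤ ‖x‖ ^ 2 := by
    rw [norm_sq_eq]
    exact Finset.single_le_sum (fun j _ => sq_nonneg (x j)) (Finset.mem_univ i)
  have := Real.sqrt_le_sqrt h1
  rwa [Real.sqrt_sq_eq_abs, Real.sqrt_sq (norm_nonneg x)] at this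

lemma le_norm_of_not_mem_box {s0 : ℝ} (hs0 : ∀ i, s0 ≤ σ i) (hs0n : 0 ≤ s0) {c : ℝ} (hc : 0 ≤ c)
    {x : EuclideanSpace ℝ (Fin d)} (hx : x ∉ box σ c) : c * s0 ≤ ‖x‖ := by
  simp only [box, Set.mem_setOf_eq, not_forall] at hx
  obtain ⟨i, hi⟩ := hx
  rw [not_and_or] at hi
  have key : c * σ i ≤ |x i| := by
    rcases hi with h | h
    · push_neg at h
      have h2 : c * σ i ≤ -(x i) := by linarith
      exact h2.trans (neg_le_abs _)
    · push_neg at h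
      exact le_trans h.le (le_abs_self _)
  calc c * s0 ≤ c * σ i := mul_le_mul_of_nonneg_left (hs0 i) hc
    _ ≤ |x i| := key
    _ ≤ ‖x‖ := abs_coord_le_norm x i

lemma mem_box_smul_inv (hσpos : ∀ i, 0 < σ i) (n : ℕ) (x : EuclideanSpace ℝ (Fin d)) :
    ((2:ℝ) ^ n)⁻¹ • x ∈ box σ 1 ↔ x ∈ box σ (2 ^ n) := by
  have h2n : (0:ℝ) < 2 ^ n := by positivity
  have hti : ((2:ℝ) ^ n)⁻¹ * 2 ^ n = 1 := inv_mul_cancel₀ h2n.ne'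
  constructor
  · intro h i
    obtain ⟨h1, h2⟩ := h i
    have hc : (((2:ℝ) ^ n)⁻¹ • x) i = ((2:ℝ) ^ n)⁻¹ * x i := rfl
    rw [hc, one_mul] at h1 h2
    refine ⟨?_, (inv_mul_le_iff₀ h2n).1 h2⟩
    have h3 := (lt_inv_mul_iff₀ h2n).1 h1
    rw [mul_neg] at h3
    exact h3
  · intro h i
    obtain ⟨h1, h2⟩ := h i
    refine ⟨?_, ?_⟩
    · show -(1 * σ i) < ((2:ℝ) ^ n)⁻¹ * x i
      rw [one_mul, lt_inv_mul_iff₀ h2n, mul_neg]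
      exact h1
    · show ((2:ℝ) ^ n)⁻¹ * x i ≤ 1 * σ i
      rw [one_mul, inv_mul_le_iff₀ h2n]
      exact h2

end geo

section MT

variable {d : ℕ} {σ : Fin d → ℝ}

local notation "E" => EuclideanSpace ℝ (Fin d)

lemma smul_inv_measurable (n : ℕ) : Measurable (fun x : E => ((2:ℝ) ^ n)⁻¹ • x) :=
  (continuous_const_smul _).measurable

lemma smul_measurable (n : ℕ) : Measurable (fun x : E => ((2:ℝ) ^ n) • x) :=
  (continuous_const_smul _).measurable

lemma RB_map_smul (μ : Measure E) (B : Set E) (n : ℕ) :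
    (RB μ B n).map (fun x => (2:ℝ) ^ n • x) = (μ B)⁻¹ • μ.restrict B := by
  rw [RB, Measure.map_map (smul_measurable n) (smul_inv_measurable n)]
  have : ((fun x : E => (2:ℝ) ^ n • x) ∘ fun x : E => ((2:ℝ) ^ n)⁻¹ • x) = id := by
    funext x
    simp [Function.comp, smul_smul, mul_inv_cancel₀ (pow_ne_zero n (two_ne_zero (α := ℝ)))]
  rw [this, Measure.map_id]

lemma normalized_prob (μ : Measure E) (B : Set E) (h0 : μ B ≠ 0) (hT : μ B ≠ ⊤) :
    IsProbabilityMeasure ((μ B)⁻¹ • μ.restrict B) :=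
  ⟨by rw [Measure.smul_apply, Measure.restrict_apply_univ, smul_eq_mul,
    ENNReal.inv_mul_cancel h0 hT]⟩

lemma RB_prob (μ : Measure E) (B : Set E) (n : ℕ) (h0 : μ B ≠ 0) (hT : μ B ≠ ⊤) :
    IsProbabilityMeasure (RB μ B n) := by
  haveI := normalized_prob μ B h0 hT
  exact Measure.isProbabilityMeasure_map (smul_inv_measurable n).aemeasurable

lemma RB_compl (hσpos : ∀ i, 0 < σ i) (μ : Measure E) (n : ℕ) :
    RB μ (Bset σ n) n ((box σ 1)ᶜ) = 0 := by
  rw [RB, Measure.map_apply (smul_inv_measurable n) (measurableSet_box σ 1).compl,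
    Measure.smul_apply,
    Measure.restrict_apply ((smul_inv_measurable n) (measurableSet_box σ 1).compl)]
  have : ((fun x : E => ((2:ℝ) ^ n)⁻¹ • x) ⁻¹' (box σ 1)ᶜ) ∩ Bset σ n = ∅ := by
    rw [Set.eq_empty_iff_forall_notMem]
    rintro x ⟨hx1, hx2⟩
    exact hx1 ((mem_box_smul_inv hσpos n x).2 (Bset_subset_box n hx2))
  rw [this]
  simp

lemma cost_measurable : Measurable (fun p : E × E => ENNReal.ofReal (‖p.1 - p.2‖ ^ 2)) :=
  ENNReal.measurable_ofReal.comp (((measurable_fst.sub measurable_snd).norm).pow_const 2)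

lemma lintegral_cost_le (hσpos : ∀ i, 0 < σ i) (hσle1 : ∀ i, σ i ≤ 1)
    {P Q : Measure E} {κ : Measure (E × E)} [IsProbabilityMeasure κ]
    (h1 : κ.map Prod.fst = P) (h2 : κ.map Prod.snd = Q)
    (hP : P (box σ 1)ᶜ = 0) (hQ : Q (box σ 1)ᶜ = 0) :
    ∫⁻ p, ENNReal.ofReal (‖p.1 - p.2‖ ^ 2) ∂κ ≤ ENNReal.ofReal (4 * d) := by
  have hbox := measurableSet_box σ 1
  have hae1 : ∀ᵐ p ∂κ, p.1 ∈ box σ 1 := by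
    rw [ae_iff]
    have : {p : E × E | ¬ p.1 ∈ box σ 1} = Prod.fst ⁻¹' (box σ 1)ᶜ := rfl
    rw [this, ← Measure.map_apply measurable_fst hbox.compl, h1, hP]
  have hae2 : ∀ᵐ p ∂κ, p.2 ∈ box σ 1 := by
    rw [ae_iff]
    have : {p : E × E | ¬ p.2 ∈ box σ 1} = Prod.snd ⁻¹' (box σ 1)ᶜ := rfl
    rw [this, ← Measure.map_apply measurable_snd hbox.compl, h2, hQ]
  calc ∫⁻ p, ENNReal.ofReal (‖p.1 - p.2‖ ^ 2) ∂κ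
      ≤ ∫⁻ _, ENNReal.ofReal (4 * d) ∂κ := by
        refine lintegral_mono_ae ?_
        filter_upwards [hae1, hae2] with p hp1 hp2
        refine ENNReal.ofReal_le_ofReal ?_
        have hb1 : ‖p.1‖ ^ 2 ≤ d * 1 ^ 2 := norm_sq_le_of_mem_box hσpos hσle1 one_pos.le hp1
        have hb2 : ‖p.2‖ ^ 2 ≤ d * 1 ^ 2 := norm_sq_le_of_mem_box hσpos hσle1 one_pos.le hp2
        have hsub : ‖p.1 - p.2‖ ≤ ‖p.1‖ + ‖p.2‖ := norm_sub_le p.1 p.2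
        have hsq : ‖p.1 - p.2‖ ^ 2 ≤ (‖p.1‖ + ‖p.2‖) ^ 2 :=
          pow_le_pow_left₀ (norm_nonneg _) hsub 2
        nlinarith [sq_nonneg (‖p.1‖ - ‖p.2‖), norm_nonneg p.1, norm_nonneg p.2]
    _ = ENNReal.ofReal (4 * d) := by simp [lintegral_const, measure_univ]

lemma exists_good_coupling (hσpos : ∀ i, 0 < σ i) (hσle1 : ∀ i, σ i ≤ 1)
    (μ ν : Measure E) [IsProbabilityMeasure μ] [IsProbabilityMeasure ν]
    (n : ℕ) (hA : μ (Bset σ n) ≠ 0) (hB : ν (Bset σ n) ≠ 0)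
    {εn : ℝ} (hεn : 0 < εn) :
    ∃ γn : Measure (E × E), IsProbabilityMeasure γn ∧
      γn.map Prod.fst = (μ (Bset σ n))⁻¹ • μ.restrict (Bset σ n) ∧
      γn.map Prod.snd = (ν (Bset σ n))⁻¹ • ν.restrict (Bset σ n) ∧
      ∫⁻ p, ENNReal.ofReal (‖p.1 - p.2‖ ^ 2) ∂γn ≤
        ENNReal.ofReal ((4:ℝ) ^ n * (W2sq (RB μ (Bset σ n) n) (RB ν (Bset σ n) n) + εn)) := by
  haveI hPμ : IsProbabilityMeasure (RB μ (Bset σ n) n) :=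
    RB_prob μ _ n hA (measure_ne_top μ _)
  haveI hPν : IsProbabilityMeasure (RB ν (Bset σ n) n) :=
    RB_prob ν _ n hB (measure_ne_top ν _)
  obtain ⟨κ, hκprob, hκ1, hκ2, hκlt⟩ := exists_coupling_lt
    (μ := RB μ (Bset σ n) n) (ν := RB ν (Bset σ n) n) hεn
  haveI := hκprob
  have hLle : ∫⁻ p, ENNReal.ofReal (‖p.1 - p.2‖ ^ 2) ∂κ ≤ ENNReal.ofReal (4 * d) :=
    lintegral_cost_le hσpos hσle1 hκ1 hκ2 (RB_compl hσpos μ n) (RB_compl hσpos ν n)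
  have hfin : ∫⁻ p, ENNReal.ofReal (‖p.1 - p.2‖ ^ 2) ∂κ ≠ ∞ :=
    (lt_of_le_of_lt hLle ENNReal.ofReal_lt_top).ne
  have hcost : ∫ p, ‖p.1 - p.2‖ ^ 2 ∂κ =
      (∫⁻ p, ENNReal.ofReal (‖p.1 - p.2‖ ^ 2) ∂κ).toReal := by
    refine integral_eq_lintegral_of_nonneg_ae (ae_of_all _ fun p => by positivity) ?_
    exact (((continuous_fst.sub continuous_snd).norm).pow 2).aestronglyMeasurable
  have hLκ : ∫⁻ p, ENNReal.ofReal (‖p.1 - p.2‖ ^ 2) ∂κ =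
      ENNReal.ofReal (∫ p, ‖p.1 - p.2‖ ^ 2 ∂κ) := by
    rw [hcost, ENNReal.ofReal_toReal hfin]
  set T : E × E → E × E := fun p => ((2:ℝ) ^ n • p.1, (2:ℝ) ^ n • p.2) with hTdef
  have hT : Measurable T :=
    ((smul_measurable n).comp measurable_fst).prodMk ((smul_measurable n).comp measurable_snd)
  refine ⟨κ.map T, Measure.isProbabilityMeasure_map hT.aemeasurable, ?_, ?_, ?_⟩
  · rw [Measure.map_map measurable_fst hT]
    have : (Prod.fst ∘ T) = (fun x : E => (2:ℝ) ^ n • x) ∘ Prod.fst := rfl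
    rw [this, ← Measure.map_map (smul_measurable n) measurable_fst, hκ1, RB_map_smul]
  · rw [Measure.map_map measurable_snd hT]
    have : (Prod.snd ∘ T) = (fun x : E => (2:ℝ) ^ n • x) ∘ Prod.snd := rfl
    rw [this, ← Measure.map_map (smul_measurable n) measurable_snd, hκ2, RB_map_smul]
  · rw [lintegral_map cost_measurable hT]
    have hptw : ∀ p : E × E, ENNReal.ofReal (‖(T p).1 - (T p).2‖ ^ 2) =
        ENNReal.ofReal ((4:ℝ) ^ n) * ENNReal.ofReal (‖p.1 - p.2‖ ^ 2) := by
      intro p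
      have h1 : (T p).1 - (T p).2 = (2:ℝ) ^ n • (p.1 - p.2) := (smul_sub _ _ _).symm
      rw [h1, norm_smul]
      have h2 : ‖(2:ℝ) ^ n‖ = (2:ℝ) ^ n := by
        rw [Real.norm_eq_abs, abs_of_pos (by positivity)]
      rw [h2, mul_pow]
      have h3 : ((2:ℝ) ^ n) ^ 2 = (4:ℝ) ^ n := by
        rw [← pow_mul, mul_comm n 2, pow_mul]; norm_num
      rw [h3, ENNReal.ofReal_mul (by positivity)]
    calc ∫⁻ p, ENNReal.ofReal (‖(T p).1 - (T p).2‖ ^ 2) ∂κ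
        = ∫⁻ p, ENNReal.ofReal ((4:ℝ) ^ n) * ENNReal.ofReal (‖p.1 - p.2‖ ^ 2) ∂κ := by
          exact lintegral_congr hptw
      _ = ENNReal.ofReal ((4:ℝ) ^ n) * ∫⁻ p, ENNReal.ofReal (‖p.1 - p.2‖ ^ 2) ∂κ :=
          lintegral_const_mul _ cost_measurable
      _ ≤ ENNReal.ofReal ((4:ℝ) ^ n) * ENNReal.ofReal
            (W2sq (RB μ (Bset σ n) n) (RB ν (Bset σ n) n) + εn) := by
          rw [hLκ]
          exact mul_le_mul_right (ENNReal.ofReal_le_ofReal hκlt.le) _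
      _ = ENNReal.ofReal ((4:ℝ) ^ n *
            (W2sq (RB μ (Bset σ n) n) (RB ν (Bset σ n) n) + εn)) := by
          rw [← ENNReal.ofReal_mul (by positivity)]

end MT

section sumlemma
variable {d : ℕ} {σ : Fin d → ℝ}

lemma ofReal_pow4 (n : ℕ) : ENNReal.ofReal ((4:ℝ) ^ n) = (4:ℝ≥0∞) ^ n := by
  rw [ENNReal.ofReal_pow (by norm_num)]
  norm_num

lemma sum_pow_meas_ne_top (hσpos : ∀ i, 0 < σ i) {s0 : ℝ} (hs0 : ∀ i, s0 ≤ σ i)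
    (hs0pos : 0 < s0) (μ : Measure (EuclideanSpace ℝ (Fin d))) [IsProbabilityMeasure μ]
    (hμ2 : Integrable (fun x => ‖x‖ ^ 2) μ) :
    ∑' n, (4:ℝ≥0∞) ^ n * μ (Bset σ n) ≠ ∞ := by
  have hmeasf : Measurable (fun x : EuclideanSpace ℝ (Fin d) => ENNReal.ofReal (‖x‖ ^ 2)) :=
    ENNReal.measurable_ofReal.comp (measurable_norm.pow_const 2)
  have hI : ∫⁻ x, ENNReal.ofReal (‖x‖ ^ 2) ∂μ ≠ ∞ := by
    have h := hμ2.2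
    rw [hasFiniteIntegral_def] at h
    have heq : ∀ x : EuclideanSpace ℝ (Fin d),
        ENNReal.ofReal (‖x‖ ^ 2) = (‖‖x‖ ^ 2‖₊ : ℝ≥0∞) := fun x =>
      (Real.enorm_eq_ofReal (by positivity)).symm
    rw [lintegral_congr heq]
    exact h.ne
  set K : ℝ≥0∞ := ENNReal.ofReal (4 / s0 ^ 2) with hK
  have key : ∀ n, (4:ℝ≥0∞) ^ (n + 1) * μ (Bset σ (n + 1)) ≤
      K * ∫⁻ x in Bset σ (n + 1), ENNReal.ofReal (‖x‖ ^ 2) ∂μ := by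
    intro n
    have hsub : ∀ x ∈ Bset σ (n + 1), (4:ℝ≥0∞) ^ (n + 1) ≤ K * ENNReal.ofReal (‖x‖ ^ 2) := by
      intro x hx
      have hnotin : x ∉ box σ (2 ^ n) := hx.2
      have h1 : (2:ℝ) ^ n * s0 ≤ ‖x‖ :=
        le_norm_of_not_mem_box hs0 hs0pos.le (by positivity) hnotin
      have h2 : ((2:ℝ) ^ n * s0) ^ 2 ≤ ‖x‖ ^ 2 := pow_le_pow_left₀ (by positivity) h1 2
      have h3 : (4:ℝ) ^ (n + 1) ≤ 4 / s0 ^ 2 * ‖x‖ ^ 2 := by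
        have h4 : ((2:ℝ) ^ n) ^ 2 = 4 ^ n := by
          rw [← pow_mul, mul_comm n 2, pow_mul]; norm_num
        rw [mul_pow, h4] at h2
        rw [pow_succ, mul_comm ((4:ℝ) ^ n) 4]
        rw [div_mul_eq_mul_div, le_div_iff₀ (by positivity)]
        nlinarith
      calc (4:ℝ≥0∞) ^ (n + 1) = ENNReal.ofReal ((4:ℝ) ^ (n + 1)) := (ofReal_pow4 (n + 1)).symm
        _ ≤ ENNReal.ofReal (4 / s0 ^ 2 * ‖x‖ ^ 2) := ENNReal.ofReal_le_ofReal h3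
        _ = K * ENNReal.ofReal (‖x‖ ^ 2) := ENNReal.ofReal_mul (by positivity)
    calc (4:ℝ≥0∞) ^ (n + 1) * μ (Bset σ (n + 1))
        = ∫⁻ _ in Bset σ (n + 1), (4:ℝ≥0∞) ^ (n + 1) ∂μ := (setLIntegral_const _ _).symm
      _ ≤ ∫⁻ x in Bset σ (n + 1), K * ENNReal.ofReal (‖x‖ ^ 2) ∂μ :=
          setLIntegral_mono (hmeasf.const_mul K) hsub
      _ = K * ∫⁻ x in Bset σ (n + 1), ENNReal.ofReal (‖x‖ ^ 2) ∂μ :=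
          lintegral_const_mul K hmeasf
  have hshift : ∑' n, (4:ℝ≥0∞) ^ (n + 1) * μ (Bset σ (n + 1)) ≤
      K * ∫⁻ x, ENNReal.ofReal (‖x‖ ^ 2) ∂μ := by
    calc ∑' n, (4:ℝ≥0∞) ^ (n + 1) * μ (Bset σ (n + 1))
        ≤ ∑' n, K * ∫⁻ x in Bset σ (n + 1), ENNReal.ofReal (‖x‖ ^ 2) ∂μ :=
          ENNReal.tsum_le_tsum key
      _ = K * ∑' n, ∫⁻ x in Bset σ (n + 1), ENNReal.ofReal (‖x‖ ^ 2) ∂μ :=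
          ENNReal.tsum_mul_left
      _ = K * ∫⁻ x in ⋃ n, Bset σ (n + 1), ENNReal.ofReal (‖x‖ ^ 2) ∂μ := by
          rw [lintegral_iUnion (fun n => measurableSet_Bset σ (n + 1))
            (fun i j hij => Bset_disjoint hσpos (by omega : i + 1 ≠ j + 1)) ]
      _ ≤ K * ∫⁻ x, ENNReal.ofReal (‖x‖ ^ 2) ∂μ :=
          mul_le_mul_right (lintegral_mono' Measure.restrict_le_self le_rfl) _
  rw [tsum_eq_zero_add' ENNReal.summable]
  refine (lt_of_le_of_lt (add_le_add (show (4:ℝ≥0∞) ^ 0 * μ (Bset σ 0) ≤ 1 by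
    simpa using prob_le_one) hshift) ?_).ne
  refine ENNReal.add_lt_top.2 ⟨ENNReal.one_lt_top, ENNReal.mul_lt_top ?_ ?_⟩
  · exact ENNReal.ofReal_lt_top
  · exact hI.lt_top

end sumlemma

section main
variable {d : ℕ} {σ : Fin d → ℝ}

/-- ENNReal version of the annulus summand. -/
noncomputable def gaux (σ : Fin d → ℝ) (μ ν : Measure (EuclideanSpace ℝ (Fin d))) (n : ℕ) :
    ℝ≥0∞ :=
  (4:ℝ≥0∞) ^ n * ((μ (Bset σ n) - min (μ (Bset σ n)) (ν (Bset σ n))) +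
    (ν (Bset σ n) - min (μ (Bset σ n)) (ν (Bset σ n))) +
    min (μ (Bset σ n)) (ν (Bset σ n)) *
      ENNReal.ofReal (W2sq (RB μ (Bset σ n) n) (RB ν (Bset σ n) n)))

lemma gaux_ne_top (μ ν : Measure (EuclideanSpace ℝ (Fin d)))
    [IsFiniteMeasure μ] [IsFiniteMeasure ν] (n : ℕ) : gaux σ μ ν n ≠ ∞ := by
  refine ENNReal.mul_ne_top (by simp) ?_
  refine ENNReal.add_ne_top.2 ⟨ENNReal.add_ne_top.2 ⟨?_, ?_⟩, ?_⟩
  · exact ((tsub_le_self).trans_lt (measure_lt_top μ _)).ne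
  · exact ((tsub_le_self).trans_lt (measure_lt_top ν _)).ne
  · exact ENNReal.mul_ne_top ((min_le_left _ _).trans_lt (measure_lt_top μ _)).ne
      ENNReal.ofReal_ne_top

lemma gaux_toReal (μ ν : Measure (EuclideanSpace ℝ (Fin d)))
    [IsFiniteMeasure μ] [IsFiniteMeasure ν] (n : ℕ) :
    (gaux σ μ ν n).toReal = (2 : ℝ) ^ (2 * n) *
      (|(μ (Bset σ n)).toReal - (ν (Bset σ n)).toReal| +
        min (μ (Bset σ n)).toReal (ν (Bset σ n)).toReal *
          W2sq (RB μ (Bset σ n) n) (RB ν (Bset σ n) n)) := by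
  have hAne : μ (Bset σ n) ≠ ∞ := measure_ne_top μ _
  have hBne : ν (Bset σ n) ≠ ∞ := measure_ne_top ν _
  have hCne : min (μ (Bset σ n)) (ν (Bset σ n)) ≠ ∞ := by
    exact ((min_le_left _ _).trans_lt hAne.lt_top).ne
  have hW0 : 0 ≤ W2sq (RB μ (Bset σ n) n) (RB ν (Bset σ n) n) := W2sq_nonneg _ _
  rw [gaux, ENNReal.toReal_mul]
  have h4 : ((4:ℝ≥0∞) ^ n).toReal = (2:ℝ) ^ (2 * n) := by
    rw [ENNReal.toReal_pow, pow_mul]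
    norm_num
  rw [h4]
  congr 1
  rw [ENNReal.toReal_add (ENNReal.add_ne_top.2 ⟨((tsub_le_self).trans_lt hAne.lt_top).ne,
      ((tsub_le_self).trans_lt hBne.lt_top).ne⟩)
      (ENNReal.mul_ne_top hCne ENNReal.ofReal_ne_top),
    ENNReal.toReal_add ((tsub_le_self).trans_lt hAne.lt_top).ne
      ((tsub_le_self).trans_lt hBne.lt_top).ne,
    ENNReal.toReal_sub_of_le (min_le_left _ _) hAne,
    ENNReal.toReal_sub_of_le (min_le_right _ _) hBne,
    ENNReal.toReal_mul, ENNReal.toReal_ofReal hW0, ENNReal.toReal_min hAne hBne]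
  set a := (μ (Bset σ n)).toReal
  set b := (ν (Bset σ n)).toReal
  congr 1
  rcases le_total a b with h | h
  · rw [min_eq_left h, abs_of_nonpos (by linarith)]; ring
  · rw [min_eq_right h, abs_of_nonneg (by linarith)]; ring

end main

section main2
variable {d : ℕ} {σ : Fin d → ℝ}

lemma W2sq_RB_le (hσpos : ∀ i, 0 < σ i) (hσle1 : ∀ i, σ i ≤ 1)
    (μ ν : Measure (EuclideanSpace ℝ (Fin d)))
    [IsProbabilityMeasure μ] [IsProbabilityMeasure ν]
    (n : ℕ) (hA0 : μ (Bset σ n) ≠ 0) (hB0 : ν (Bset σ n) ≠ 0) :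
    W2sq (RB μ (Bset σ n) n) (RB ν (Bset σ n) n) ≤ 4 * d := by
  haveI h1 := RB_prob μ (Bset σ n) n hA0 (measure_ne_top μ _)
  haveI h2 := RB_prob ν (Bset σ n) n hB0 (measure_ne_top ν _)
  set P := RB μ (Bset σ n) n
  set Q := RB ν (Bset σ n) n
  have hm1 : (P.prod Q).map Prod.fst = P := by rw [Measure.map_fst_prod, measure_univ, one_smul]
  have hm2 : (P.prod Q).map Prod.snd = Q := by rw [Measure.map_snd_prod, measure_univ, one_smul]
  have hL := lintegral_cost_le hσpos hσle1 hm1 hm2 (RB_compl hσpos μ n) (RB_compl hσpos ν n)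
  have hcost : ∫ p, ‖p.1 - p.2‖ ^ 2 ∂(P.prod Q) =
      (∫⁻ p, ENNReal.ofReal (‖p.1 - p.2‖ ^ 2) ∂(P.prod Q)).toReal :=
    integral_eq_lintegral_of_nonneg_ae (ae_of_all _ fun p => by positivity)
      (((continuous_fst.sub continuous_snd).norm.pow 2).aestronglyMeasurable)
  calc W2sq P Q ≤ ∫ p, ‖p.1 - p.2‖ ^ 2 ∂(P.prod Q) := W2sq_le_integral inferInstance hm1 hm2
    _ = (∫⁻ p, ENNReal.ofReal (‖p.1 - p.2‖ ^ 2) ∂(P.prod Q)).toReal := hcost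
    _ ≤ (ENNReal.ofReal (4 * d)).toReal := ENNReal.toReal_mono ENNReal.ofReal_ne_top hL
    _ = 4 * d := ENNReal.toReal_ofReal (by positivity)

lemma gaux_sum_ne_top (hσpos : ∀ i, 0 < σ i) (hσle1 : ∀ i, σ i ≤ 1)
    {s0 : ℝ} (hs0 : ∀ i, s0 ≤ σ i) (hs0pos : 0 < s0)
    (μ ν : Measure (EuclideanSpace ℝ (Fin d)))
    [IsProbabilityMeasure μ] [IsProbabilityMeasure ν]
    (hμ2 : Integrable (fun x => ‖x‖ ^ 2) μ) (hν2 : Integrable (fun x => ‖x‖ ^ 2) ν) :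
    ∑' n, gaux σ μ ν n ≠ ∞ := by
  have hSA := sum_pow_meas_ne_top hσpos hs0 hs0pos μ hμ2
  have hSB := sum_pow_meas_ne_top hσpos hs0 hs0pos ν hν2
  set K : ℝ≥0∞ := ENNReal.ofReal (4 * (d:ℝ)) with hK
  have hle : ∀ n, gaux σ μ ν n ≤
      ((4:ℝ≥0∞) ^ n * μ (Bset σ n)) * (1 + K) + (4:ℝ≥0∞) ^ n * ν (Bset σ n) := by
    intro n
    rw [gaux]
    have hX : μ (Bset σ n) - min (μ (Bset σ n)) (ν (Bset σ n)) ≤ μ (Bset σ n) := tsub_le_self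
    have hY : ν (Bset σ n) - min (μ (Bset σ n)) (ν (Bset σ n)) ≤ ν (Bset σ n) := tsub_le_self
    have hZ : min (μ (Bset σ n)) (ν (Bset σ n)) *
        ENNReal.ofReal (W2sq (RB μ (Bset σ n) n) (RB ν (Bset σ n) n)) ≤ μ (Bset σ n) * K := by
      by_cases hC : min (μ (Bset σ n)) (ν (Bset σ n)) = 0
      · simp [hC]
      · have hA0 : μ (Bset σ n) ≠ 0 := fun h =>
          hC (le_antisymm (le_trans (min_le_left _ _) h.le) zero_le)
        have hB0 : ν (Bset σ n) ≠ 0 := fun h =>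
          hC (le_antisymm (le_trans (min_le_right _ _) h.le) zero_le)
        exact mul_le_mul' (min_le_left _ _)
          (ENNReal.ofReal_le_ofReal (W2sq_RB_le hσpos hσle1 μ ν n hA0 hB0))
    calc (4:ℝ≥0∞) ^ n * (_ + _ + _)
        ≤ (4:ℝ≥0∞) ^ n * ((μ (Bset σ n) + ν (Bset σ n)) + μ (Bset σ n) * K) :=
          mul_le_mul_right (add_le_add (add_le_add hX hY) hZ) _
      _ = ((4:ℝ≥0∞) ^ n * μ (Bset σ n)) * (1 + K) + (4:ℝ≥0∞) ^ n * ν (Bset σ n) := by ring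
  have htot : ∑' n, gaux σ μ ν n ≤
      (∑' n, (4:ℝ≥0∞) ^ n * μ (Bset σ n)) * (1 + K) +
        ∑' n, (4:ℝ≥0∞) ^ n * ν (Bset σ n) := by
    calc ∑' n, gaux σ μ ν n
        ≤ ∑' n, (((4:ℝ≥0∞) ^ n * μ (Bset σ n)) * (1 + K) + (4:ℝ≥0∞) ^ n * ν (Bset σ n)) :=
          ENNReal.tsum_le_tsum hle
      _ = (∑' n, (4:ℝ≥0∞) ^ n * μ (Bset σ n)) * (1 + K) +
          ∑' n, (4:ℝ≥0∞) ^ n * ν (Bset σ n) := by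
          rw [ENNReal.tsum_add, ENNReal.tsum_mul_right]
  refine (lt_of_le_of_lt htot ?_).ne
  refine ENNReal.add_lt_top.2 ⟨ENNReal.mul_lt_top hSA.lt_top ?_, hSB.lt_top⟩
  exact ENNReal.add_lt_top.2 ⟨ENNReal.one_lt_top, ENNReal.ofReal_lt_top⟩

end main2

section main3
variable {d : ℕ} {σ : Fin d → ℝ}

/-- Normalized restriction of `μ` to `Bset σ n`. -/
noncomputable def muN (σ : Fin d → ℝ) (μ : Measure (EuclideanSpace ℝ (Fin d))) (n : ℕ) :
    Measure (EuclideanSpace ℝ (Fin d)) :=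
  (μ (Bset σ n))⁻¹ • μ.restrict (Bset σ n)

lemma normsq_measurable :
    Measurable (fun x : EuclideanSpace ℝ (Fin d) => ENNReal.ofReal (‖x‖ ^ 2)) :=
  ENNReal.measurable_ofReal.comp (measurable_norm.pow_const 2)

lemma pow24 (n : ℕ) : ((2:ℝ) ^ n) ^ 2 = 4 ^ n := by
  rw [← pow_mul, mul_comm n 2, pow_mul]; norm_num

lemma muN_univ (μ : Measure (EuclideanSpace ℝ (Fin d))) [IsFiniteMeasure μ] (n : ℕ)
    (h0 : μ (Bset σ n) ≠ 0) : muN σ μ n Set.univ = 1 :=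
  (normalized_prob μ _ h0 (measure_ne_top μ _)).measure_univ

lemma restrict_zero_of_zero (μ : Measure (EuclideanSpace ℝ (Fin d))) (n : ℕ)
    (h0 : μ (Bset σ n) = 0) : μ.restrict (Bset σ n) = 0 :=
  Measure.measure_univ_eq_zero.1 (by rw [Measure.restrict_apply_univ]; exact h0)

lemma lintegral_normsq_muN_le (hσpos : ∀ i, 0 < σ i) (hσle1 : ∀ i, σ i ≤ 1)
    (μ : Measure (EuclideanSpace ℝ (Fin d))) [IsFiniteMeasure μ] (n : ℕ) :
    ∫⁻ x, ENNReal.ofReal (‖x‖ ^ 2) ∂(muN σ μ n) ≤ (d : ℝ≥0∞) * 4 ^ n := by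
  by_cases hA0 : μ (Bset σ n) = 0
  · rw [muN, restrict_zero_of_zero μ n hA0]
    simp
  · rw [muN, lintegral_smul_measure]
    have hptw : ∀ x ∈ Bset σ n, ENNReal.ofReal (‖x‖ ^ 2) ≤ (d : ℝ≥0∞) * 4 ^ n := by
      intro x hx
      have h1 : ‖x‖ ^ 2 ≤ (d : ℝ) * ((2:ℝ) ^ n) ^ 2 :=
        norm_sq_le_of_mem_box hσpos hσle1 (by positivity) (Bset_subset_box n hx)
      rw [pow24] at h1
      calc ENNReal.ofReal (‖x‖ ^ 2) ≤ ENNReal.ofReal ((d : ℝ) * 4 ^ n) :=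
            ENNReal.ofReal_le_ofReal h1
        _ = (d : ℝ≥0∞) * 4 ^ n := by
            rw [ENNReal.ofReal_mul (by positivity), ENNReal.ofReal_natCast, ofReal_pow4]
    calc (μ (Bset σ n))⁻¹ * ∫⁻ x in Bset σ n, ENNReal.ofReal (‖x‖ ^ 2) ∂μ
        ≤ (μ (Bset σ n))⁻¹ * (((d : ℝ≥0∞) * 4 ^ n) * μ (Bset σ n)) := by
          refine mul_le_mul_right ?_ _
          calc ∫⁻ x in Bset σ n, ENNReal.ofReal (‖x‖ ^ 2) ∂μ
              ≤ ∫⁻ _ in Bset σ n, ((d : ℝ≥0∞) * 4 ^ n) ∂μ :=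
                setLIntegral_mono measurable_const hptw
            _ = ((d : ℝ≥0∞) * 4 ^ n) * μ (Bset σ n) := setLIntegral_const _ _
      _ = ((d : ℝ≥0∞) * 4 ^ n) * ((μ (Bset σ n))⁻¹ * μ (Bset σ n)) := by ring
      _ = ((d : ℝ≥0∞) * 4 ^ n) * 1 := by
          rw [ENNReal.inv_mul_cancel hA0 (measure_ne_top μ _)]
      _ = (d : ℝ≥0∞) * 4 ^ n := mul_one _

end main3

section main4
variable {d : ℕ} {σ : Fin d → ℝ}

lemma main_eps (hd : 0 < d) (hσpos : ∀ i, 0 < σ i) (hσle1 : ∀ i, σ i ≤ 1)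
    (μ ν : Measure (EuclideanSpace ℝ (Fin d)))
    [IsProbabilityMeasure μ] [IsProbabilityMeasure ν]
    (hgsum : ∑' n, gaux σ μ ν n ≠ ∞) {ε : ℝ} (hε : 0 < ε) :
    W2sq μ ν ≤ 2 * d * (∑' n, gaux σ μ ν n).toReal + ε := by
  classical
  have hdisj := Bset_disjoint (σ := σ) hσpos
  have hmeas := measurableSet_Bset σ
  have hunion := iUnion_Bset (σ := σ) hσpos
  set F : EuclideanSpace ℝ (Fin d) × EuclideanSpace ℝ (Fin d) → ℝ≥0∞ :=
    fun p => ENNReal.ofReal (‖p.1 - p.2‖ ^ 2) with hF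
  set C : ℕ → ℝ≥0∞ := fun n => min (μ (Bset σ n)) (ν (Bset σ n)) with hC
  set Wf : ℕ → ℝ := fun n => W2sq (RB μ (Bset σ n) n) (RB ν (Bset σ n) n) with hWf
  have hCA : ∀ n, C n ≤ μ (Bset σ n) := fun n => min_le_left _ _
  have hCB : ∀ n, C n ≤ ν (Bset σ n) := fun n => min_le_right _ _
  have hAsum : ∑' n, μ (Bset σ n) = 1 := by
    rw [← measure_iUnion hdisj hmeas, hunion, measure_univ]
  have hBsum : ∑' n, ν (Bset σ n) = 1 := by
    rw [← measure_iUnion hdisj hmeas, hunion, measure_univ]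
  have hCsum_le : ∑' n, C n ≤ 1 := hAsum ▸ ENNReal.tsum_le_tsum hCA
  have hCsum_ne : ∑' n, C n ≠ ∞ := (lt_of_le_of_lt hCsum_le ENNReal.one_lt_top).ne
  have hC1 : ∀ n, C n ≤ 1 := fun n => le_trans (hCA n) prob_le_one
  have hW0 : ∀ n, 0 ≤ Wf n := fun n => W2sq_nonneg _ _
  -- near-optimal couplings on each annulus
  have hex : ∀ n, ∃ γn : Measure (EuclideanSpace ℝ (Fin d) × EuclideanSpace ℝ (Fin d)),
      (C n • γn) Set.univ = C n ∧
      (C n • γn).map Prod.fst = C n • muN σ μ n ∧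
      (C n • γn).map Prod.snd = C n • muN σ ν n ∧
      ∫⁻ p, F p ∂(C n • γn) ≤
        C n * ((4:ℝ≥0∞) ^ n * ENNReal.ofReal (Wf n)) + ENNReal.ofReal (ε / 2 / 2 ^ n) := by
    intro n
    by_cases hCn : C n = 0
    · refine ⟨0, by simp [hCn], by simp [hCn], by simp [hCn], by simp [hCn]⟩
    · have hA0 : μ (Bset σ n) ≠ 0 := fun h =>
        hCn (le_antisymm (le_trans (hCA n) h.le) zero_le)
      have hB0 : ν (Bset σ n) ≠ 0 := fun h =>
        hCn (le_antisymm (le_trans (hCB n) h.le) zero_le)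
      set εn : ℝ := (ε / 2 / 2 ^ n) / 4 ^ n with hεn
      have hεnpos : 0 < εn := by positivity
      obtain ⟨γn, hprob, h1, h2, h3⟩ := exists_good_coupling hσpos hσle1 μ ν n hA0 hB0 hεnpos
      haveI := hprob
      refine ⟨γn, ?_, ?_, ?_, ?_⟩
      · rw [Measure.smul_apply, measure_univ, smul_eq_mul, mul_one]
      · rw [Measure.map_smul, h1]; rfl
      · rw [Measure.map_smul, h2]; rfl
      · rw [lintegral_smul_measure]
        have h4εn : (4:ℝ) ^ n * εn = ε / 2 / 2 ^ n := by
          rw [hεn]; field_simp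
        calc C n * ∫⁻ p, F p ∂γn
            ≤ C n * ENNReal.ofReal ((4:ℝ) ^ n * (Wf n + εn)) := mul_le_mul_right h3 _
          _ = C n * (ENNReal.ofReal ((4:ℝ) ^ n * Wf n) + ENNReal.ofReal ((4:ℝ) ^ n * εn)) := by
              rw [mul_add ((4:ℝ) ^ n), ENNReal.ofReal_add (mul_nonneg (by positivity) (hW0 n)) (by positivity)]
          _ = C n * ENNReal.ofReal ((4:ℝ) ^ n * Wf n) + C n * ENNReal.ofReal ((4:ℝ) ^ n * εn) :=
              mul_add _ _ _
          _ ≤ C n * ((4:ℝ≥0∞) ^ n * ENNReal.ofReal (Wf n)) + ENNReal.ofReal (ε / 2 / 2 ^ n) := by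
              refine add_le_add (le_of_eq ?_) ?_
              · rw [ENNReal.ofReal_mul (by positivity), ofReal_pow4]
              · rw [h4εn]
                calc C n * ENNReal.ofReal (ε / 2 / 2 ^ n)
                    ≤ 1 * ENNReal.ofReal (ε / 2 / 2 ^ n) := mul_le_mul_left (hC1 n) _
                  _ = ENNReal.ofReal (ε / 2 / 2 ^ n) := one_mul _
  choose γs hγu hγ1 hγ2 hγ3 using hex
  -- remainder measures
  set μrem : Measure (EuclideanSpace ℝ (Fin d)) :=
    Measure.sum (fun n => (μ (Bset σ n) - C n) • muN σ μ n) with hμrem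
  set νrem : Measure (EuclideanSpace ℝ (Fin d)) :=
    Measure.sum (fun n => (ν (Bset σ n) - C n) • muN σ ν n) with hνrem
  set m : ℝ≥0∞ := 1 - ∑' n, C n with hm
  have hm_ne_top : m ≠ ∞ := (lt_of_le_of_lt tsub_le_self ENNReal.one_lt_top).ne
  have hμn_univ : ∀ n, ((μ (Bset σ n) - C n) • muN σ μ n) Set.univ = μ (Bset σ n) - C n := by
    intro n
    rw [Measure.smul_apply, smul_eq_mul]
    by_cases hA0 : μ (Bset σ n) = 0
    · have hC0 : C n = 0 := le_antisymm (le_trans (hCA n) hA0.le) zero_le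
      simp [hA0, hC0]
    · rw [muN_univ μ n hA0, mul_one]
  have hνn_univ : ∀ n, ((ν (Bset σ n) - C n) • muN σ ν n) Set.univ = ν (Bset σ n) - C n := by
    intro n
    rw [Measure.smul_apply, smul_eq_mul]
    by_cases hB0 : ν (Bset σ n) = 0
    · have hC0 : C n = 0 := le_antisymm (le_trans (hCB n) hB0.le) zero_le
      simp [hB0, hC0]
    · rw [muN_univ ν n hB0, mul_one]
  have hμrem_univ : μrem Set.univ = m := by
    rw [hμrem, Measure.sum_apply _ MeasurableSet.univ, tsum_congr hμn_univ,
      ENNReal.tsum_sub hCsum_ne hCA, hAsum]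
  have hνrem_univ : νrem Set.univ = m := by
    rw [hνrem, Measure.sum_apply _ MeasurableSet.univ, tsum_congr hνn_univ,
      ENNReal.tsum_sub hCsum_ne hCB, hBsum]
  haveI hμremfin : IsFiniteMeasure μrem :=
    ⟨by rw [hμrem_univ]; exact lt_of_le_of_lt tsub_le_self ENNReal.one_lt_top⟩
  haveI hνremfin : IsFiniteMeasure νrem :=
    ⟨by rw [hνrem_univ]; exact lt_of_le_of_lt tsub_le_self ENNReal.one_lt_top⟩
  set ρ : Measure (EuclideanSpace ℝ (Fin d) × EuclideanSpace ℝ (Fin d)) :=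
    m⁻¹ • (μrem.prod νrem) with hρ
  have hρ0 : m = 0 → ρ = 0 := by
    intro hm0
    have h0 : μrem = 0 := Measure.measure_univ_eq_zero.1 (by rw [hμrem_univ, hm0])
    rw [hρ, h0, Measure.zero_prod, smul_zero]
  set γ : Measure (EuclideanSpace ℝ (Fin d) × EuclideanSpace ℝ (Fin d)) :=
    Measure.sum (fun n => C n • γs n) + ρ with hγ
  -- piecewise reconstruction
  have hsum_restrictμ : Measure.sum (fun n => μ.restrict (Bset σ n)) = μ := by
    rw [← Measure.restrict_iUnion hdisj hmeas, hunion, Measure.restrict_univ]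
  have hsum_restrictν : Measure.sum (fun n => ν.restrict (Bset σ n)) = ν := by
    rw [← Measure.restrict_iUnion hdisj hmeas, hunion, Measure.restrict_univ]
  have hmarg_pieceμ : ∀ n, C n • muN σ μ n + (μ (Bset σ n) - C n) • muN σ μ n =
      μ.restrict (Bset σ n) := by
    intro n
    rw [← add_smul, add_tsub_cancel_of_le (hCA n)]
    by_cases hA0 : μ (Bset σ n) = 0
    · rw [restrict_zero_of_zero μ n hA0, hA0, zero_smul]
    · rw [muN, smul_smul, ENNReal.mul_inv_cancel hA0 (measure_ne_top μ _), one_smul]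
  have hmarg_pieceν : ∀ n, C n • muN σ ν n + (ν (Bset σ n) - C n) • muN σ ν n =
      ν.restrict (Bset σ n) := by
    intro n
    rw [← add_smul, add_tsub_cancel_of_le (hCB n)]
    by_cases hB0 : ν (Bset σ n) = 0
    · rw [restrict_zero_of_zero ν n hB0, hB0, zero_smul]
    · rw [muN, smul_smul, ENNReal.mul_inv_cancel hB0 (measure_ne_top ν _), one_smul]
  -- marginals of γ
  have hρfst : ρ.map Prod.fst = μrem := by
    by_cases hm0 : m = 0
    · have h0 : μrem = 0 := Measure.measure_univ_eq_zero.1 (by rw [hμrem_univ, hm0])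
      rw [hρ0 hm0, h0]
      simp
    · rw [hρ, Measure.map_smul, Measure.map_fst_prod, hνrem_univ, smul_smul,
        ENNReal.inv_mul_cancel hm0 hm_ne_top, one_smul]
  have hρsnd : ρ.map Prod.snd = νrem := by
    by_cases hm0 : m = 0
    · have h0 : νrem = 0 := Measure.measure_univ_eq_zero.1 (by rw [hνrem_univ, hm0])
      rw [hρ0 hm0, h0]
      simp
    · rw [hρ, Measure.map_smul, Measure.map_snd_prod, hμrem_univ, smul_smul,
        ENNReal.inv_mul_cancel hm0 hm_ne_top, one_smul]
  have hfst : γ.map Prod.fst = μ := by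
    rw [hγ, Measure.map_add _ _ measurable_fst, map_sum_meas measurable_fst, hρfst]
    have h1 : (Measure.sum fun n => ((C n • γs n).map Prod.fst)) =
        Measure.sum (fun n => C n • muN σ μ n) := by
      congr 1
      funext n
      exact hγ1 n
    rw [h1, hμrem, Measure.sum_add_sum]
    calc Measure.sum (fun n => C n • muN σ μ n + (μ (Bset σ n) - C n) • muN σ μ n)
        = Measure.sum (fun n => μ.restrict (Bset σ n)) := by
          congr 1
          funext n
          exact hmarg_pieceμ n
      _ = μ := hsum_restrictμ
  have hsnd : γ.map Prod.snd = ν := by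
    rw [hγ, Measure.map_add _ _ measurable_snd, map_sum_meas measurable_snd, hρsnd]
    have h1 : (Measure.sum fun n => ((C n • γs n).map Prod.snd)) =
        Measure.sum (fun n => C n • muN σ ν n) := by
      congr 1
      funext n
      exact hγ2 n
    rw [h1, hνrem, Measure.sum_add_sum]
    calc Measure.sum (fun n => C n • muN σ ν n + (ν (Bset σ n) - C n) • muN σ ν n)
        = Measure.sum (fun n => ν.restrict (Bset σ n)) := by
          congr 1
          funext n
          exact hmarg_pieceν n
      _ = ν := hsum_restrictν
  have hρuniv : ρ Set.univ = m := by
    by_cases hm0 : m = 0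
    · rw [hρ0 hm0, hm0]; simp
    · rw [hρ, Measure.smul_apply, smul_eq_mul, ← Set.univ_prod_univ, Measure.prod_prod,
        hμrem_univ, hνrem_univ, ← mul_assoc, ENNReal.inv_mul_cancel hm0 hm_ne_top, one_mul]
  have hγprob : IsProbabilityMeasure γ := by
    constructor
    rw [hγ, Measure.add_apply, Measure.sum_apply _ MeasurableSet.univ, tsum_congr hγu, hρuniv,
      hm, add_tsub_cancel_of_le hCsum_le]
  -- cost of the coupling
  have hFμrem : ∫⁻ x, ENNReal.ofReal (‖x‖ ^ 2) ∂μrem ≤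
      ∑' n, (μ (Bset σ n) - C n) * ((d : ℝ≥0∞) * 4 ^ n) := by
    rw [hμrem, lintegral_sum_measure]
    refine ENNReal.tsum_le_tsum fun n => ?_
    rw [lintegral_smul_measure]
    exact mul_le_mul_right (lintegral_normsq_muN_le hσpos hσle1 μ n) _
  have hFνrem : ∫⁻ x, ENNReal.ofReal (‖x‖ ^ 2) ∂νrem ≤
      ∑' n, (ν (Bset σ n) - C n) * ((d : ℝ≥0∞) * 4 ^ n) := by
    rw [hνrem, lintegral_sum_measure]
    refine ENNReal.tsum_le_tsum fun n => ?_
    rw [lintegral_smul_measure]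
    exact mul_le_mul_right (lintegral_normsq_muN_le hσpos hσle1 ν n) _
  have hmm1 : m⁻¹ * m ≤ 1 := by
    by_cases hm0 : m = 0
    · rw [hm0, mul_zero]; exact zero_le
    · rw [ENNReal.inv_mul_cancel hm0 hm_ne_top]
  have hρcost : ∫⁻ p, F p ∂ρ ≤
      2 * ((∫⁻ x, ENNReal.ofReal (‖x‖ ^ 2) ∂μrem) + ∫⁻ x, ENNReal.ofReal (‖x‖ ^ 2) ∂νrem) := by
    have hptwF : ∀ p : EuclideanSpace ℝ (Fin d) × EuclideanSpace ℝ (Fin d),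
        F p ≤ 2 * (ENNReal.ofReal (‖p.1‖ ^ 2) + ENNReal.ofReal (‖p.2‖ ^ 2)) := by
      intro p
      have h1 : ‖p.1 - p.2‖ ^ 2 ≤ 2 * (‖p.1‖ ^ 2 + ‖p.2‖ ^ 2) := by
        have hs : ‖p.1 - p.2‖ ≤ ‖p.1‖ + ‖p.2‖ := norm_sub_le _ _
        have hsq : ‖p.1 - p.2‖ ^ 2 ≤ (‖p.1‖ + ‖p.2‖) ^ 2 :=
          pow_le_pow_left₀ (norm_nonneg _) hs 2
        nlinarith [sq_nonneg (‖p.1‖ - ‖p.2‖)]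
      calc F p ≤ ENNReal.ofReal (2 * (‖p.1‖ ^ 2 + ‖p.2‖ ^ 2)) := ENNReal.ofReal_le_ofReal h1
        _ = 2 * (ENNReal.ofReal (‖p.1‖ ^ 2) + ENNReal.ofReal (‖p.2‖ ^ 2)) := by
            rw [ENNReal.ofReal_mul (by norm_num), ENNReal.ofReal_add (by positivity)
              (by positivity), ENNReal.ofReal_ofNat]
    have hmeas1 : Measurable (fun p : EuclideanSpace ℝ (Fin d) × EuclideanSpace ℝ (Fin d) =>
        ENNReal.ofReal (‖p.1‖ ^ 2)) := normsq_measurable.comp measurable_fst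
    have hmeas2 : Measurable (fun p : EuclideanSpace ℝ (Fin d) × EuclideanSpace ℝ (Fin d) =>
        ENNReal.ofReal (‖p.2‖ ^ 2)) := normsq_measurable.comp measurable_snd
    have hmargμ : ∫⁻ p, ENNReal.ofReal (‖p.1‖ ^ 2) ∂(μrem.prod νrem) =
        m * ∫⁻ x, ENNReal.ofReal (‖x‖ ^ 2) ∂μrem := by
      rw [← lintegral_map normsq_measurable measurable_fst, Measure.map_fst_prod,
        hνrem_univ, lintegral_smul_measure, smul_eq_mul]
    have hmargν : ∫⁻ p, ENNReal.ofReal (‖p.2‖ ^ 2) ∂(μrem.prod νrem) =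
        m * ∫⁻ x, ENNReal.ofReal (‖x‖ ^ 2) ∂νrem := by
      rw [← lintegral_map normsq_measurable measurable_snd, Measure.map_snd_prod,
        hμrem_univ, lintegral_smul_measure, smul_eq_mul]
    have hprodcost : ∫⁻ p, F p ∂(μrem.prod νrem) ≤
        2 * (m * ∫⁻ x, ENNReal.ofReal (‖x‖ ^ 2) ∂μrem +
          m * ∫⁻ x, ENNReal.ofReal (‖x‖ ^ 2) ∂νrem) := by
      calc ∫⁻ p, F p ∂(μrem.prod νrem)
          ≤ ∫⁻ p, 2 * (ENNReal.ofReal (‖p.1‖ ^ 2) + ENNReal.ofReal (‖p.2‖ ^ 2))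
              ∂(μrem.prod νrem) := lintegral_mono hptwF
        _ = 2 * (∫⁻ p, ENNReal.ofReal (‖p.1‖ ^ 2) ∂(μrem.prod νrem) +
            ∫⁻ p, ENNReal.ofReal (‖p.2‖ ^ 2) ∂(μrem.prod νrem)) := by
            rw [lintegral_const_mul (f := fun p : EuclideanSpace ℝ (Fin d) × EuclideanSpace ℝ (Fin d) =>
                ENNReal.ofReal (‖p.1‖ ^ 2) + ENNReal.ofReal (‖p.2‖ ^ 2)) _ (hmeas1.add hmeas2), lintegral_add_left hmeas1]
        _ = 2 * (m * ∫⁻ x, ENNReal.ofReal (‖x‖ ^ 2) ∂μrem +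
            m * ∫⁻ x, ENNReal.ofReal (‖x‖ ^ 2) ∂νrem) := by rw [hmargμ, hmargν]
    calc ∫⁻ p, F p ∂ρ = m⁻¹ * ∫⁻ p, F p ∂(μrem.prod νrem) := by
          rw [hρ, lintegral_smul_measure, smul_eq_mul]
      _ ≤ m⁻¹ * (2 * (m * ∫⁻ x, ENNReal.ofReal (‖x‖ ^ 2) ∂μrem +
          m * ∫⁻ x, ENNReal.ofReal (‖x‖ ^ 2) ∂νrem)) := mul_le_mul_right hprodcost _
      _ = (m⁻¹ * m) * (2 * ((∫⁻ x, ENNReal.ofReal (‖x‖ ^ 2) ∂μrem) +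
          ∫⁻ x, ENNReal.ofReal (‖x‖ ^ 2) ∂νrem)) := by ring
      _ ≤ 1 * (2 * ((∫⁻ x, ENNReal.ofReal (‖x‖ ^ 2) ∂μrem) +
          ∫⁻ x, ENNReal.ofReal (‖x‖ ^ 2) ∂νrem)) := mul_le_mul_left hmm1 _
      _ = 2 * ((∫⁻ x, ENNReal.ofReal (‖x‖ ^ 2) ∂μrem) +
          ∫⁻ x, ENNReal.ofReal (‖x‖ ^ 2) ∂νrem) := one_mul _
  -- total lintegral bound
  have h2d1 : (1:ℝ≥0∞) ≤ 2 * (d : ℝ≥0∞) := by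
    have h1 : (1:ℝ≥0∞) ≤ (d : ℝ≥0∞) := by
      exact_mod_cast Nat.one_le_cast.2 hd
    calc (1:ℝ≥0∞) = 1 * 1 := (one_mul 1).symm
      _ ≤ 2 * (d : ℝ≥0∞) := mul_le_mul' (by norm_num) h1
  have hLtotal : ∫⁻ p, F p ∂γ ≤
      (2 * (d : ℝ≥0∞)) * (∑' n, gaux σ μ ν n) + ENNReal.ofReal ε := by
    have hL1 : ∫⁻ p, F p ∂γ = (∑' n, ∫⁻ p, F p ∂(C n • γs n)) + ∫⁻ p, F p ∂ρ := by
      rw [hγ, lintegral_add_measure, lintegral_sum_measure]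
    have hsum1 : ∑' n, ∫⁻ p, F p ∂(C n • γs n) ≤
        (∑' n, C n * ((4:ℝ≥0∞) ^ n * ENNReal.ofReal (Wf n))) + ENNReal.ofReal ε := by
      calc ∑' n, ∫⁻ p, F p ∂(C n • γs n)
          ≤ ∑' n, (C n * ((4:ℝ≥0∞) ^ n * ENNReal.ofReal (Wf n)) +
            ENNReal.ofReal (ε / 2 / 2 ^ n)) := ENNReal.tsum_le_tsum hγ3
        _ = (∑' n, C n * ((4:ℝ≥0∞) ^ n * ENNReal.ofReal (Wf n))) +
            ∑' n, ENNReal.ofReal (ε / 2 / 2 ^ n) := ENNReal.tsum_add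
        _ = (∑' n, C n * ((4:ℝ≥0∞) ^ n * ENNReal.ofReal (Wf n))) + ENNReal.ofReal ε := by
            rw [← ENNReal.ofReal_tsum_of_nonneg (fun n => by positivity)
              (hasSum_geometric_two' ε).summable, tsum_geometric_two']
    have hper : ∀ n, C n * ((4:ℝ≥0∞) ^ n * ENNReal.ofReal (Wf n)) +
        2 * ((μ (Bset σ n) - C n) * ((d : ℝ≥0∞) * 4 ^ n) +
          (ν (Bset σ n) - C n) * ((d : ℝ≥0∞) * 4 ^ n)) ≤
        (2 * (d : ℝ≥0∞)) * gaux σ μ ν n := by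
      intro n
      have hgeq : (2 * (d : ℝ≥0∞)) * gaux σ μ ν n =
          (2 * (d : ℝ≥0∞)) * ((4:ℝ≥0∞) ^ n * (C n * ENNReal.ofReal (Wf n))) +
          2 * ((μ (Bset σ n) - C n) * ((d : ℝ≥0∞) * 4 ^ n) +
            (ν (Bset σ n) - C n) * ((d : ℝ≥0∞) * 4 ^ n)) := by
        rw [gaux, hC, hWf]
        ring
      rw [hgeq]
      refine add_le_add_left ?_ _
      calc C n * ((4:ℝ≥0∞) ^ n * ENNReal.ofReal (Wf n))
          = 1 * ((4:ℝ≥0∞) ^ n * (C n * ENNReal.ofReal (Wf n))) := by ring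
        _ ≤ (2 * (d : ℝ≥0∞)) * ((4:ℝ≥0∞) ^ n * (C n * ENNReal.ofReal (Wf n))) :=
            mul_le_mul_left h2d1 _
    calc ∫⁻ p, F p ∂γ
        ≤ ((∑' n, C n * ((4:ℝ≥0∞) ^ n * ENNReal.ofReal (Wf n))) + ENNReal.ofReal ε) +
          2 * ((∑' n, (μ (Bset σ n) - C n) * ((d : ℝ≥0∞) * 4 ^ n)) +
            ∑' n, (ν (Bset σ n) - C n) * ((d : ℝ≥0∞) * 4 ^ n)) := by
          rw [hL1]
          exact add_le_add hsum1 (le_trans hρcost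
            (mul_le_mul_right (add_le_add hFμrem hFνrem) _))
      _ = (∑' n, (C n * ((4:ℝ≥0∞) ^ n * ENNReal.ofReal (Wf n)) +
            2 * ((μ (Bset σ n) - C n) * ((d : ℝ≥0∞) * 4 ^ n) +
              (ν (Bset σ n) - C n) * ((d : ℝ≥0∞) * 4 ^ n)))) + ENNReal.ofReal ε := by
          have hsplit : (∑' n, (C n * ((4:ℝ≥0∞) ^ n * ENNReal.ofReal (Wf n)) +
              2 * ((μ (Bset σ n) - C n) * ((d : ℝ≥0∞) * 4 ^ n) +
                (ν (Bset σ n) - C n) * ((d : ℝ≥0∞) * 4 ^ n)))) =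
              (∑' n, C n * ((4:ℝ≥0∞) ^ n * ENNReal.ofReal (Wf n))) +
              2 * ((∑' n, (μ (Bset σ n) - C n) * ((d : ℝ≥0∞) * 4 ^ n)) +
                ∑' n, (ν (Bset σ n) - C n) * ((d : ℝ≥0∞) * 4 ^ n)) := by
            rw [ENNReal.tsum_add, ENNReal.tsum_mul_left, ENNReal.tsum_add]
          rw [hsplit]
          ring
      _ ≤ (∑' n, (2 * (d : ℝ≥0∞)) * gaux σ μ ν n) + ENNReal.ofReal ε :=
          add_le_add_left (ENNReal.tsum_le_tsum hper) _
      _ = (2 * (d : ℝ≥0∞)) * (∑' n, gaux σ μ ν n) + ENNReal.ofReal ε := by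
          rw [ENNReal.tsum_mul_left]
  -- conclude
  have hcostγ : ∫ p, ‖p.1 - p.2‖ ^ 2 ∂γ = (∫⁻ p, F p ∂γ).toReal := by
    refine integral_eq_lintegral_of_nonneg_ae (ae_of_all _ fun p => by positivity) ?_
    exact (((continuous_fst.sub continuous_snd).norm).pow 2).aestronglyMeasurable
  have hRne : (2 * (d : ℝ≥0∞)) * (∑' n, gaux σ μ ν n) + ENNReal.ofReal ε ≠ ∞ := by
    refine ENNReal.add_ne_top.2 ⟨ENNReal.mul_ne_top ?_ hgsum, ENNReal.ofReal_ne_top⟩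
    exact ENNReal.mul_ne_top (by norm_num) (ENNReal.natCast_ne_top d)
  calc W2sq μ ν ≤ ∫ p, ‖p.1 - p.2‖ ^ 2 ∂γ := W2sq_le_integral hγprob hfst hsnd
    _ = (∫⁻ p, F p ∂γ).toReal := hcostγ
    _ ≤ ((2 * (d : ℝ≥0∞)) * (∑' n, gaux σ μ ν n) + ENNReal.ofReal ε).toReal :=
        ENNReal.toReal_mono hRne hLtotal
    _ = 2 * d * (∑' n, gaux σ μ ν n).toReal + ε := by
        rw [ENNReal.toReal_add (ENNReal.mul_ne_top (ENNReal.mul_ne_top (by norm_num)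
          (ENNReal.natCast_ne_top d)) hgsum) ENNReal.ofReal_ne_top,
          ENNReal.toReal_mul, ENNReal.toReal_mul, ENNReal.toReal_ofNat,
          ENNReal.toReal_natCast, ENNReal.toReal_ofReal hε.le]

end main4

/-- annulus decomposition bound for `W₂²`. -/
theorem stmt4 (d : ℕ) (hd : 0 < d) (σ : Fin d → ℝ)
    (hσ1 : σ ⟨0, hd⟩ = 1) (hσmono : ∀ i j : Fin d, i ≤ j → σ j ≤ σ i)
    (hσpos : ∀ i, 0 < σ i)
    (μ ν : Measure (EuclideanSpace ℝ (Fin d)))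
    [IsProbabilityMeasure μ] [IsProbabilityMeasure ν]
    (hμ2 : Integrable (fun x => ‖x‖ ^ 2) μ) (hν2 : Integrable (fun x => ‖x‖ ^ 2) ν) :
    W2sq μ ν ≤ 2 * d * ∑' n : ℕ, (2 : ℝ) ^ (2 * n) *
      (|(μ (Bset σ n)).toReal - (ν (Bset σ n)).toReal| +
        min (μ (Bset σ n)).toReal (ν (Bset σ n)).toReal *
          W2sq (RB μ (Bset σ n) n) (RB ν (Bset σ n) n)) := by
  have hσle1 : ∀ i, σ i ≤ 1 := fun i =>
    le_trans (hσmono ⟨0, hd⟩ i (Fin.le_def.mpr (Nat.zero_le _))) (le_of_eq hσ1)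
  have hs0pos : 0 < σ ⟨d - 1, by omega⟩ := hσpos _
  have hs0le : ∀ i, σ ⟨d - 1, by omega⟩ ≤ σ i := fun i =>
    hσmono i ⟨d - 1, by omega⟩ (Fin.le_def.mpr (by have := i.2; simp; omega))
  have hgsum : ∑' n, gaux σ μ ν n ≠ ∞ :=
    gaux_sum_ne_top hσpos hσle1 hs0le hs0pos μ ν hμ2 hν2
  have hmain : W2sq μ ν ≤ 2 * d * (∑' n, gaux σ μ ν n).toReal := by
    by_contra h
    push_neg at h
    have hkey := main_eps hd hσpos hσle1 μ ν hgsum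
      (show 0 < (W2sq μ ν - 2 * d * (∑' n, gaux σ μ ν n).toReal) / 2 by linarith)
    linarith [hkey]
  calc W2sq μ ν ≤ 2 * d * (∑' n, gaux σ μ ν n).toReal := hmain
    _ = 2 * d * ∑' n : ℕ, (2 : ℝ) ^ (2 * n) *
      (|(μ (Bset σ n)).toReal - (ν (Bset σ n)).toReal| +
        min (μ (Bset σ n)).toReal (ν (Bset σ n)).toReal *
          W2sq (RB μ (Bset σ n) n) (RB ν (Bset σ n) n)) := by
        congr 1
        rw [ENNReal.tsum_toReal_eq (fun n => gaux_ne_top μ ν n)]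
        exact tsum_congr fun n => gaux_toReal μ ν n
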